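/- Let m : ℝ → ℝ be continuous and integrable, and u = p * m with p(x) = (1/2)e^{-|x|}. Suppose there exists x₀ ∈ ℝ such that m(x) ≥ 0 for x ≤ x₀ and m(x) ≤ 0 for x ≥ x₀. Then u(x₀)² - u'(x₀)² ≤ 0, i.e. |u(x₀)| ≤ |u'(x₀)|. -/

import Mathlib

open MeasureTheory Real Set

/-- The kernel `p(x) = (1/2) e^{-|x|}`. -/
noncomputable def pKer (x : ℝ) : ℝ := (1 / 2) * Real.exp (-|x|)

private lemma Ioi_diff (g : ℝ → ℝ) (hg : ∀ x : ℝ, IntegrableOn g (Ioi x))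
    (a b : ℝ) :
    (∫ y in Ioi b, g y) = (∫ y in Ioi a, g y) - ∫ y in a..b, g y := by
  have key : ∀ c d : ℝ, c ≤ d →
      (∫ y in Ioi c, g y) = (∫ y in Ioc c d, g y) + ∫ y in Ioi d, g y := by
    intro c d hcd
    rw [← setIntegral_union (Ioc_disjoint_Ioi le_rfl) measurableSet_Ioi
      ((hg c).mono_set Ioc_subset_Ioi_self) (hg d), Ioc_union_Ioi_eq_Ioi hcd]
  rcases le_total a b with hab | hab
  · rw [intervalIntegral.integral_of_le hab, key a b hab]; ring
  · rw [intervalIntegral.integral_of_ge hab, key b a hab]; ring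

/-- If `m` is continuous, integrable, `u = p * m`, and `m ≥ 0` on `(-∞, x₀]`,
`m ≤ 0` on `[x₀, ∞)`, then `u(x₀)² - u'(x₀)² ≤ 0`, i.e. `|u(x₀)| ≤ |u'(x₀)|`. -/
theorem sign_condition_square_nonpos
    (m : ℝ → ℝ) (hmc : Continuous m) (hmi : Integrable m)
    (u : ℝ → ℝ) (hu : ∀ x, u x = ∫ y, pKer (x - y) * m y)
    (x₀ : ℝ)
    (hpos : ∀ x ≤ x₀, 0 ≤ m x) (hneg : ∀ x ≥ x₀, m x ≤ 0) :
    (u x₀) ^ 2 - (deriv u x₀) ^ 2 ≤ 0 ∧ |u x₀| ≤ |deriv u x₀| := by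
  set f : ℝ → ℝ := fun y => Real.exp y * m y with hf
  set g : ℝ → ℝ := fun y => Real.exp (-y) * m y with hg
  have hfc : Continuous f := (Real.continuous_exp).mul hmc
  have hgc : Continuous g := (Real.continuous_exp.comp continuous_neg).mul hmc
  -- integrability of f on Iic x
  have hfi : ∀ x : ℝ, IntegrableOn f (Iic x) := by
    intro x
    refine Integrable.mono' ((hmi.abs.restrict).const_mul (Real.exp x))
      hfc.aestronglyMeasurable.restrict ?_
    filter_upwards [ae_restrict_mem measurableSet_Iic] with y hy
    simp only [hf, Real.norm_eq_abs, abs_mul, Real.abs_exp]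
    exact mul_le_mul_of_nonneg_right (Real.exp_le_exp.2 hy) (abs_nonneg _)
  have hgi : ∀ x : ℝ, IntegrableOn g (Ioi x) := by
    intro x
    refine Integrable.mono' ((hmi.abs.restrict).const_mul (Real.exp (-x)))
      hgc.aestronglyMeasurable.restrict ?_
    filter_upwards [ae_restrict_mem measurableSet_Ioi] with y hy
    simp only [hg, Real.norm_eq_abs, abs_mul, Real.abs_exp]
    exact mul_le_mul_of_nonneg_right (Real.exp_le_exp.2 (by linarith [mem_Ioi.1 hy]))
      (abs_nonneg _)
  set F : ℝ → ℝ := fun x => ∫ y in Iic x, f y with hF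
  set G : ℝ → ℝ := fun x => ∫ y in Ioi x, g y with hG
  -- splitting of u
  have hu2 : ∀ x : ℝ, u x = (1/2) * (Real.exp (-x) * F x + Real.exp x * G x) := by
    intro x
    have hker : Integrable (fun y => pKer (x - y) * m y) := by
      have hpk : Continuous pKer := by
        unfold pKer
        exact continuous_const.mul (Real.continuous_exp.comp continuous_abs.neg)
      refine Integrable.mono' (hmi.abs.const_mul (1/2))
        (((hpk.comp (by continuity)).mul hmc).aestronglyMeasurable) ?_
      filter_upwards with y
      rw [Real.norm_eq_abs, abs_mul, pKer, abs_of_nonneg (by positivity)]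
      have : Real.exp (-|x - y|) ≤ 1 := Real.exp_le_one_iff.2 (neg_nonpos.2 (abs_nonneg _))
      nlinarith [abs_nonneg (m y)]
    rw [hu x, ← intervalIntegral.integral_Iic_add_Ioi (b := x) hker.integrableOn hker.integrableOn]
    have h1 : (∫ y in Iic x, pKer (x - y) * m y) = (1/2) * (Real.exp (-x) * F x) := by
      rw [hF]
      simp only
      rw [← mul_assoc, ← integral_const_mul]
      refine setIntegral_congr_fun measurableSet_Iic fun y hy => ?_
      have : |x - y| = x - y := abs_of_nonneg (by simpa using mem_Iic.1 hy)
      rw [pKer, this]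
      rw [show -(x - y) = -x + y by ring, Real.exp_add]
      ring
    have h2 : (∫ y in Ioi x, pKer (x - y) * m y) = (1/2) * (Real.exp x * G x) := by
      rw [hG]
      simp only
      rw [← mul_assoc, ← integral_const_mul]
      refine setIntegral_congr_fun measurableSet_Ioi fun y hy => ?_
      have : |x - y| = y - x := by
        rw [abs_of_nonpos (by simpa using (mem_Ioi.1 hy).le)]; ring
      rw [pKer, this]
      rw [show -(y - x) = x + -y by ring, Real.exp_add]
      ring
    rw [h1, h2]
    ring
  -- derivative of F at x₀
  have hFd : HasDerivAt F (f x₀) x₀ := by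
    have heq : ∀ x : ℝ, F x = F x₀ + ∫ y in x₀..x, f y := by
      intro x
      rw [← intervalIntegral.integral_Iic_sub_Iic (hfi x₀) (hfi x)]
      simp [hF]
    have : HasDerivAt (fun x => F x₀ + ∫ y in x₀..x, f y) (f x₀) x₀ := by
      refine HasDerivAt.const_add _ ?_
      exact intervalIntegral.integral_hasDerivAt_right
        (hfc.intervalIntegrable _ _)
        (hfc.stronglyMeasurableAtFilter _ _)
        hfc.continuousAt
    exact this.congr_of_eventuallyEq (Filter.Eventually.of_forall fun x => heq x)
  have hGd : HasDerivAt G (-(g x₀)) x₀ := by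
    have heq : ∀ x : ℝ, G x = G x₀ - ∫ y in x₀..x, g y := fun x =>
      Ioi_diff g hgi x₀ x
    have : HasDerivAt (fun x => G x₀ - ∫ y in x₀..x, g y) (-(g x₀)) x₀ := by
      refine HasDerivAt.const_sub _ ?_
      exact intervalIntegral.integral_hasDerivAt_right
        (hgc.intervalIntegrable _ _)
        (hgc.stronglyMeasurableAtFilter _ _)
        hgc.continuousAt
    exact this.congr_of_eventuallyEq (Filter.Eventually.of_forall fun x => heq x)
  -- derivative of u
  have hexp : Real.exp (-x₀) * Real.exp x₀ = 1 := by
    rw [← Real.exp_add]; simp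
  have hud : HasDerivAt u ((1/2) * (Real.exp x₀ * G x₀ - Real.exp (-x₀) * F x₀)) x₀ := by
    have h1 : HasDerivAt (fun x : ℝ => Real.exp (-x)) (-Real.exp (-x₀)) x₀ := by
      simpa using (hasDerivAt_neg x₀).exp
    have h2 : HasDerivAt Real.exp (Real.exp x₀) x₀ := Real.hasDerivAt_exp x₀
    have := (((h1.mul hFd).add (h2.mul hGd)).const_mul (1/2 : ℝ))
    have heq : u = fun x => (1/2) * (Real.exp (-x) * F x + Real.exp x * G x) :=
      funext hu2
    rw [heq]
    refine this.congr_deriv ?_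
    simp only [hf, hg]
    nlinarith [hexp]
  have hderiv : deriv u x₀ = (1/2) * (Real.exp x₀ * G x₀ - Real.exp (-x₀) * F x₀) :=
    hud.deriv
  -- sign conditions
  have hFnn : 0 ≤ F x₀ :=
    setIntegral_nonneg measurableSet_Iic fun y hy =>
      mul_nonneg (Real.exp_pos y).le (hpos y (mem_Iic.1 hy))
  have hGnp : G x₀ ≤ 0 :=
    setIntegral_nonpos measurableSet_Ioi fun y hy =>
      mul_nonpos_of_nonneg_of_nonpos (Real.exp_pos (-y)).le (hneg y (mem_Ioi.1 hy).le)
  have key : (u x₀) ^ 2 - (deriv u x₀) ^ 2 = F x₀ * G x₀ := by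
    rw [hderiv, hu2 x₀]
    nlinarith [hexp]
  have hle : (u x₀) ^ 2 - (deriv u x₀) ^ 2 ≤ 0 := by
    rw [key]; exact mul_nonpos_of_nonneg_of_nonpos hFnn hGnp
  refine ⟨hle, ?_⟩
  rw [← Real.sqrt_sq_eq_abs, ← Real.sqrt_sq_eq_abs]
  exact Real.sqrt_le_sqrt (by linarith)
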